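/- Let (X, 𝒜, μ) be a non-atomic probability space and 𝒯 a tree in 𝒜. Then for every I ∈ 𝒯 and every α with 0 < α < 1, there exists a subfamily ℱ of 𝒯 consisting of pairwise almost disjoint subsets of I such that μ(⋃_{J∈ℱ} J) = Σ_{J∈ℱ} μ(J) = (1 − α)·μ(I). -/

import Mathlib

open MeasureTheory Filter Set

noncomputable section

/-- The generations of a tree: generation 0 is `{univ}`, and generation `n+1`
consists of the children (via `C`) of elements of generation `n`. -/
def treeGen {X : Type*} (C : Set X → Set (Set X)) : ℕ → Set (Set X)
  | 0 => {Set.univ}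
  | n + 1 => ⋃ I ∈ treeGen C n, C I

/-- `T` is a tree on the measure space `(X, μ)` with child assignment `C`. -/
structure IsTree {X : Type*} [MeasurableSpace X] (μ : Measure X)
    (T : Set (Set X)) (C : Set X → Set (Set X)) : Prop where
  univ_mem : Set.univ ∈ T
  meas : ∀ I ∈ T, MeasurableSet I
  pos : ∀ I ∈ T, 0 < μ I
  child_sub : ∀ I ∈ T, C I ⊆ T
  child_countable : ∀ I ∈ T, (C I).Countable
  child_nontrivial : ∀ I ∈ T, ∃ J ∈ C I, ∃ J' ∈ C I, J ≠ J'
  child_almost_disjoint : ∀ I ∈ T, ∀ J ∈ C I, ∀ J' ∈ C I, J ≠ J' → μ (J ∩ J') = 0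
  child_cover : ∀ I ∈ T, I = ⋃₀ C I
  eq_iUnion_gen : T = ⋃ n, treeGen C n
  tendsto_gen : Filter.Tendsto (fun n => ⨆ I ∈ treeGen C n, μ I) Filter.atTop (nhds 0)

/-- The dyadic maximal operator associated with the tree `T`. -/
def maxOp {X : Type*} [MeasurableSpace X] (μ : Measure X) (T : Set (Set X))
    (φ : X → ℝ) (x : X) : ℝ :=
  sSup {r : ℝ | ∃ I ∈ T, x ∈ I ∧ r = (∫ y in I, |φ y| ∂μ) / (μ I).toReal}

section Aux

variable {X : Type*} [MeasurableSpace X] (μ : Measure X)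
  (T : Set (Set X)) (C : Set X → Set (Set X))

/-- The property of a valid greedy step output `(g, K', r')` at node `K` with target `r`:
`g` is a pairwise a.e.-disjoint batch of children of `K` (padded with `∅`), each a.e.-disjoint
from the next node `K'`, the batch total plus the new residual `r'` equals `r`, and
either we have terminated (`K' = ∅`, `r' = 0`) or `K'` is a child with `0 < r' < μ K'`. -/
def StepP (K : Set X) (r : ENNReal) (p : (ℕ → Set X) × Set X × ENNReal) : Prop :=
  (∀ n, p.1 n = ∅ ∨ p.1 n ∈ C K) ∧
  (∀ n, p.1 n ⊆ K) ∧
  (∀ m n, m ≠ n → μ (p.1 m ∩ p.1 n) = 0) ∧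
  (∀ n, μ (p.1 n ∩ p.2.1) = 0) ∧
  p.2.1 ⊆ K ∧
  (∑' n, μ (p.1 n)) + p.2.2 = r ∧
  ((p.2.1 = ∅ ∧ p.2.2 = 0) ∨ (p.2.1 ∈ C K ∧ 0 < p.2.2 ∧ p.2.2 < μ p.2.1))

variable [IsProbabilityMeasure μ]

theorem stepExists (hT : IsTree μ T C) (K : Set X) (hK : K ∈ T) (r : ENNReal)
    (hr0 : 0 < r) (hrK : r < μ K) : ∃ p, StepP μ C K r p := by
  classical
  obtain ⟨J₀, hJ₀, -⟩ := hT.child_nontrivial K hK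
  obtain ⟨e, he⟩ := (hT.child_countable K hK).exists_eq_range ⟨J₀, hJ₀⟩
  -- deduplicated enumeration of the children of K
  set g : ℕ → Set X := fun n => if ∃ m < n, e m = e n then ∅ else e n with hg
  have hchild : ∀ {J}, J ∈ C K → J ⊆ K := by
    intro J hJ
    rw [hT.child_cover K hK]
    exact subset_sUnion_of_mem hJ
  have hmem : ∀ n, g n = ∅ ∨ g n ∈ C K := by
    intro n
    by_cases h : ∃ m < n, e m = e n
    · left; simp [hg, h]
    · right; simp only [hg, h, if_false]
      rw [he]; exact mem_range_self n
  have hTchild : ∀ {J}, J ∈ C K → J ∈ T := fun hJ => hT.child_sub K hK hJ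
  have hne : ∀ {J}, J ∈ C K → J ≠ ∅ := by
    intro J hJ h
    have := hT.pos J (hTchild hJ)
    simp [h] at this
  have hsub : ∀ n, g n ⊆ K := by
    intro n
    rcases hmem n with h | h
    · simp [h]
    · exact hchild h
  have hgne : ∀ {m n}, m < n → g n ≠ ∅ → g m ≠ g n := by
    intro m n hmn hn heq
    have hn' : ¬ ∃ m < n, e m = e n := by
      intro h; exact hn (by simp [hg, h])
    have hgn : g n = e n := by simp [hg, hn']
    have hgm : g m = e m := by
      by_cases h : ∃ m' < m, e m' = e m
      · exfalso; apply hn; rw [← heq]; simp [hg, h]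
      · simp [hg, h]
    exact hn' ⟨m, hmn, by rw [← hgm, ← hgn, heq]⟩
  have hpair : ∀ m n, m ≠ n → μ (g m ∩ g n) = 0 := by
    have key : ∀ m n, m < n → μ (g m ∩ g n) = 0 := by
      intro m n hmn
      rcases hmem n with h | h
      · simp [h]
      rcases hmem m with h' | h'
      · simp [h']
      exact hT.child_almost_disjoint K hK _ h' _ h (hgne hmn (hne h))
    intro m n hmn
    rcases lt_or_gt_of_ne hmn with h | h
    · exact key m n h
    · rw [inter_comm]; exact key n m h
  have hcover : (⋃ n, g n) = K := by
    apply Subset.antisymm (iUnion_subset hsub)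
    intro x hx
    rw [hT.child_cover K hK] at hx
    obtain ⟨J, hJ, hxJ⟩ := hx
    have hex : ∃ n, e n = J := by rw [he] at hJ; exact hJ
    have hspec : e (Nat.find hex) = J := Nat.find_spec hex
    have hkey : g (Nat.find hex) = J := by
      have hmin : ¬ ∃ m < Nat.find hex, e m = e (Nat.find hex) := by
        rintro ⟨m, hm, hme⟩
        exact Nat.find_min hex hm (hme.trans hspec)
      have : g (Nat.find hex) = e (Nat.find hex) := if_neg hmin
      rw [this, hspec]
    exact mem_iUnion.mpr ⟨Nat.find hex, by rw [hkey]; exact hxJ⟩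
  have hnull : ∀ n, NullMeasurableSet (g n) μ := by
    intro n; rcases hmem n with h | h
    · rw [h]; exact MeasurableSet.empty.nullMeasurableSet
    · exact (hT.meas _ (hTchild h)).nullMeasurableSet
  have hsum : μ K = ∑' n, μ (g n) := by
    rw [← hcover]
    exact measure_iUnion₀ (fun m n hmn => hpair m n hmn) hnull
  have hex : ∃ k, r < ∑ i ∈ Finset.range k, μ (g i) := by
    by_contra h
    push_neg at h
    have := le_of_tendsto' (ENNReal.tendsto_nat_tsum (fun n => μ (g n))) h
    rw [← hsum] at this
    exact absurd hrK (not_lt.mpr this)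
  have hk₀0 : Nat.find hex ≠ 0 := by
    intro h
    have := Nat.find_spec hex
    rw [h] at this
    simp at this
  obtain ⟨m, hm⟩ : ∃ m, Nat.find hex = m + 1 := ⟨Nat.find hex - 1, by omega⟩
  have hSm : ∑ i ∈ Finset.range m, μ (g i) ≤ r := not_lt.mp (Nat.find_min hex (by omega))
  have hlt : r < (∑ i ∈ Finset.range m, μ (g i)) + μ (g m) := by
    have := Nat.find_spec hex
    rw [hm, Finset.sum_range_succ] at this
    exact this
  have hrtop : r < ⊤ := hrK.trans (measure_lt_top μ K)
  have hSmtop : (∑ i ∈ Finset.range m, μ (g i)) ≠ ⊤ := (hSm.trans_lt hrtop).ne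
  set r' := r - ∑ i ∈ Finset.range m, μ (g i) with hr'def
  have hsum' : (∑ i ∈ Finset.range m, μ (g i)) + r' = r := add_tsub_cancel_of_le hSm
  have hr'lt : r' < μ (g m) := by
    rw [hr'def, ENNReal.sub_lt_iff_lt_right hSmtop hSm, add_comm]
    exact hlt
  set g' : ℕ → Set X := fun n => if n < m then g n else ∅ with hg'
  have hbsum : ∑' n, μ (g' n) = ∑ i ∈ Finset.range m, μ (g i) := by
    have h1 : ∑' n, μ (g' n) = ∑ i ∈ Finset.range m, μ (g' i) := by
      apply tsum_eq_sum
      intro b hb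
      have : ¬ b < m := by simpa using hb
      simp [hg', this]
    rw [h1]
    apply Finset.sum_congr rfl
    intro i hi
    simp [hg', Finset.mem_range.mp hi]
  have hmem' : ∀ n, g' n = ∅ ∨ g' n ∈ C K := by
    intro n
    by_cases h : n < m
    · simpa [hg', h] using hmem n
    · left; simp [hg', h]
  have hsub' : ∀ n, g' n ⊆ K := by
    intro n
    by_cases h : n < m
    · simpa [hg', h] using hsub n
    · simp [hg', h]
  have hpair' : ∀ a b, a ≠ b → μ (g' a ∩ g' b) = 0 := by
    intro a b hab
    by_cases ha : a < m <;> by_cases hb : b < m <;>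
      simp [hg', ha, hb, hpair a b hab]
  by_cases hr' : r' = 0
  · refine ⟨⟨g', ∅, 0⟩, hmem', hsub', hpair', ?_, empty_subset K, ?_, Or.inl ⟨rfl, rfl⟩⟩
    · intro n; simp
    · rw [hbsum, add_zero, ← hsum', hr', add_zero]
  · have hgmne : g m ≠ ∅ := by
      intro h
      rw [h] at hr'lt
      simp at hr'lt
    have hgm : g m ∈ C K := (hmem m).resolve_left hgmne
    refine ⟨⟨g', g m, r'⟩, hmem', hsub', hpair', ?_, hchild hgm, ?_,
      Or.inr ⟨hgm, pos_iff_ne_zero.mpr hr', hr'lt⟩⟩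
    · intro n
      by_cases h : n < m
      · simp only [hg']
        rw [if_pos h]
        exact hpair n m (Nat.ne_of_lt h)
      · simp [hg', h]
    · rw [hbsum]; exact hsum'

open Classical in
/-- Totalized greedy step function. -/
def stepFn (hT : IsTree μ T C) (s : Set X × ENNReal) : (ℕ → Set X) × Set X × ENNReal :=
  if h : s.1 ∈ T ∧ 0 < s.2 ∧ s.2 < μ s.1 then
    (stepExists μ T C hT s.1 h.1 s.2 h.2.1 h.2.2).choose
  else ⟨fun _ => ∅, ∅, 0⟩

theorem stepFn_spec (hT : IsTree μ T C) (s : Set X × ENNReal)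
    (h : s.1 ∈ T ∧ 0 < s.2 ∧ s.2 < μ s.1) : StepP μ C s.1 s.2 (stepFn μ T C hT s) := by
  unfold stepFn
  rw [dif_pos h]
  exact (stepExists μ T C hT s.1 h.1 s.2 h.2.1 h.2.2).choose_spec

theorem stepFn_neg (hT : IsTree μ T C) (s : Set X × ENNReal)
    (h : ¬ (s.1 ∈ T ∧ 0 < s.2 ∧ s.2 < μ s.1)) :
    stepFn μ T C hT s = ⟨fun _ => ∅, ∅, 0⟩ := by
  unfold stepFn
  exact dif_neg h

/-- The sequence of states `(current node, residual target)` of the greedy construction. -/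
def seqFn (hT : IsTree μ T C) (I : Set X) (t0 : ENNReal) : ℕ → Set X × ENNReal
  | 0 => (I, t0)
  | n + 1 => (stepFn μ T C hT (seqFn hT I t0 n)).2

end Aux

theorem stmt4 {X : Type*} [MeasurableSpace X] (μ : Measure X)
    [IsProbabilityMeasure μ] [NullSingletonClass μ]
    (T : Set (Set X)) (C : Set X → Set (Set X)) (hT : IsTree μ T C)
    (I : Set X) (hI : I ∈ T) (α : ℝ) (hα0 : 0 < α) (hα1 : α < 1) :
    ∃ F : Set (Set X), F ⊆ T ∧ (∀ J ∈ F, J ⊆ I) ∧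
      (∀ J ∈ F, ∀ J' ∈ F, J ≠ J' → μ (J ∩ J') = 0) ∧
      μ (⋃₀ F) = ENNReal.ofReal (1 - α) * μ I ∧
      (∑' J : F, μ (J : Set X)) = ENNReal.ofReal (1 - α) * μ I := by
  classical
  set t0 : ENNReal := ENNReal.ofReal (1 - α) * μ I with ht0def
  have hc0 : (0 : ENNReal) < ENNReal.ofReal (1 - α) := ENNReal.ofReal_pos.mpr (by linarith)
  have hc1 : ENNReal.ofReal (1 - α) < 1 := by
    rw [← ENNReal.ofReal_one]
    exact (ENNReal.ofReal_lt_ofReal_iff one_pos).mpr (by linarith)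
  have hμI : 0 < μ I := hT.pos I hI
  have ht00 : 0 < t0 := ENNReal.mul_pos hc0.ne' hμI.ne'
  have ht0I : t0 < μ I := by
    rw [ht0def]
    calc ENNReal.ofReal (1 - α) * μ I < 1 * μ I :=
      (mul_comm _ _).trans_lt (((ENNReal.mul_lt_mul_right hμI.ne' (measure_ne_top μ I)) hc1).trans_eq (mul_comm _ _))
    _ = μ I := one_mul _
  obtain ⟨g0, hg0⟩ : ∃ n, I ∈ treeGen C n := by
    have h := hI
    rw [hT.eq_iUnion_gen] at h
    exact mem_iUnion.mp h
  have hgenT : ∀ n, treeGen C n ⊆ T := by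
    intro n
    rw [hT.eq_iUnion_gen]
    exact subset_iUnion (treeGen C) n
  set seq : ℕ → Set X × ENNReal := seqFn μ T C hT I t0 with hseq
  set batch : ℕ → ℕ → Set X := fun n => (stepFn μ T C hT (seq n)).1 with hbatch
  -- the invariant
  have hinv : ∀ n, ((seq n).1 = ∅ ∧ (seq n).2 = 0) ∨
      ((seq n).1 ∈ treeGen C (g0 + n) ∧ (seq n).1 ∈ T ∧ 0 < (seq n).2 ∧
        (seq n).2 < μ (seq n).1) := by
    intro n
    induction n with
    | zero => exact Or.inr ⟨hg0, hI, ht00, ht0I⟩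
    | succ n ih =>
      rcases ih with ⟨h1, h2⟩ | ⟨hgen, hmem, hpos, hlt⟩
      · left
        have : seq (n + 1) = (stepFn μ T C hT (seq n)).2 := rfl
        rw [this, stepFn_neg μ T C hT (seq n) (by rw [h2]; simp)]
        exact ⟨rfl, rfl⟩
      · have hs := stepFn_spec μ T C hT (seq n) ⟨hmem, hpos, hlt⟩
        have hseqn : seq (n + 1) = (stepFn μ T C hT (seq n)).2 := rfl
        rcases hs.2.2.2.2.2.2 with ⟨h1, h2⟩ | ⟨hc, h1, h2⟩
        · left; rw [hseqn]; exact ⟨h1, h2⟩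
        · right
          rw [hseqn]
          have hgen' : (stepFn μ T C hT (seq n)).2.1 ∈ treeGen C (g0 + (n + 1)) := by
            show _ ∈ treeGen C (g0 + n + 1)
            exact mem_iUnion₂.mpr ⟨(seq n).1, hgen, hc⟩
          exact ⟨hgen', hT.child_sub _ hmem hc, h1, h2⟩
  -- basic batch and chain properties
  have hstep : ∀ n, ((∀ i, batch n i = ∅ ∨ batch n i ∈ T) ∧
      (∀ i, batch n i ⊆ (seq n).1) ∧
      (∀ i j, i ≠ j → μ (batch n i ∩ batch n j) = 0) ∧
      (∀ i, μ (batch n i ∩ (seq (n + 1)).1) = 0) ∧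
      (seq (n + 1)).1 ⊆ (seq n).1 ∧
      (∑' i, μ (batch n i)) + (seq (n + 1)).2 = (seq n).2) := by
    intro n
    have hseqn : seq (n + 1) = (stepFn μ T C hT (seq n)).2 := rfl
    rcases hinv n with ⟨h1, h2⟩ | ⟨hgen, hmem, hpos, hlt⟩
    · have hz := stepFn_neg μ T C hT (seq n) (by rw [h2]; simp)
      have hb : batch n = fun _ => ∅ := by
        show (stepFn μ T C hT (seq n)).1 = _
        rw [hz]
      refine ⟨?_, ?_, ?_, ?_, ?_, ?_⟩ <;>
        simp [hb, hseqn, hz, h1, h2]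
    · have hs := stepFn_spec μ T C hT (seq n) ⟨hmem, hpos, hlt⟩
      obtain ⟨hsmem, hssub, hspair, hsnext, hsKsub, hssum, -⟩ := hs
      refine ⟨fun i => (hsmem i).imp_right (fun hc => hT.child_sub _ hmem hc), hssub, hspair,
        fun i => by rw [hseqn]; exact hsnext i, by rw [hseqn]; exact hsKsub,
        by rw [hseqn]; exact hssum⟩
  -- the chain is decreasing
  have hchain : ∀ a b, a ≤ b → (seq b).1 ⊆ (seq a).1 := by
    intro a b hab
    induction b with
    | zero => cases Nat.le_zero.mp hab; exact subset_rfl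
    | succ b ih =>
      rcases Nat.lt_or_ge a (b + 1) with h | h
      · exact ((hstep b).2.2.2.2.1).trans (ih (by omega))
      · have : a = b + 1 := by omega
        cases this; exact subset_rfl
  -- residuals tend to zero
  have hres0 : Tendsto (fun n => (seq n).2) atTop (nhds 0) := by
    have hbd : ∀ n, (seq n).2 ≤ ⨆ J ∈ treeGen C (g0 + n), μ J := by
      intro n
      rcases hinv n with ⟨-, h2⟩ | ⟨hgen, -, -, hlt⟩
      · rw [h2]; exact zero_le
      · exact hlt.le.trans (le_biSup μ hgen)
    have hcomp : Tendsto (fun n => ⨆ J ∈ treeGen C (g0 + n), μ J) atTop (nhds 0) := by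
      apply hT.tendsto_gen.comp
      exact tendsto_atTop_mono (fun n => Nat.le_add_left n g0) tendsto_id
    exact tendsto_of_tendsto_of_tendsto_of_le_of_le tendsto_const_nhds hcomp
      (fun n => zero_le) hbd
  -- partial sums identity
  set A : ℕ → ENNReal := fun n => ∑' i, μ (batch n i) with hA
  have hP : ∀ N, (∑ n ∈ Finset.range N, A n) + (seq N).2 = t0 := by
    intro N
    induction N with
    | zero => simp [hseq, seqFn]
    | succ N ih =>
      have hAN : A N + (seq (N + 1)).2 = (seq N).2 := (hstep N).2.2.2.2.2
      rw [Finset.sum_range_succ, add_assoc, hAN]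
      exact ih
  have htsumA : (∑' n, A n) = t0 := by
    have h1 : Tendsto (fun N => (∑ n ∈ Finset.range N, A n) + (seq N).2) atTop
        (nhds ((∑' n, A n) + 0)) := (ENNReal.tendsto_nat_tsum A).add hres0
    have h2 : Tendsto (fun N => (∑ n ∈ Finset.range N, A n) + (seq N).2) atTop
        (nhds t0) := by
      have heq : (fun N => (∑ n ∈ Finset.range N, A n) + (seq N).2) = fun _ => t0 :=
        funext hP
      rw [heq]
      exact tendsto_const_nhds
    have := tendsto_nhds_unique h1 h2
    rwa [add_zero] at this
  -- flattened family
  set h : ℕ × ℕ → Set X := fun p => batch p.1 p.2 with hh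
  have hhT : ∀ p, h p = ∅ ∨ h p ∈ T := fun p => (hstep p.1).1 p.2
  have hhI : ∀ p, h p ⊆ I := by
    intro p
    have h1 : h p ⊆ (seq p.1).1 := (hstep p.1).2.1 p.2
    have h2 : (seq p.1).1 ⊆ (seq 0).1 := hchain 0 p.1 (Nat.zero_le _)
    exact h1.trans h2
  have hhpair : ∀ p q : ℕ × ℕ, p ≠ q → μ (h p ∩ h q) = 0 := by
    have key : ∀ p q : ℕ × ℕ, p.1 < q.1 → μ (h p ∩ h q) = 0 := by
      intro p q hpq
      have h1 : h q ⊆ (seq (p.1 + 1)).1 :=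
        ((hstep q.1).2.1 q.2).trans (hchain (p.1 + 1) q.1 hpq)
      have h2 : h p ∩ h q ⊆ batch p.1 p.2 ∩ (seq (p.1 + 1)).1 :=
        inter_subset_inter subset_rfl h1
      exact measure_mono_null h2 ((hstep p.1).2.2.2.1 p.2)
    rintro ⟨pa, pb⟩ ⟨qa, qb⟩ hpq
    rcases lt_trichotomy pa qa with h1 | h1 | h1
    · exact key (pa, pb) (qa, qb) h1
    · cases h1
      have h2 : pb ≠ qb := by
        intro h3
        exact hpq (by rw [h3])
      exact (hstep pa).2.2.1 pb qb h2
    · rw [inter_comm]; exact key (qa, qb) (pa, pb) h1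
  have hhpos : ∀ p, h p ≠ ∅ → 0 < μ (h p) := by
    intro p hp
    exact hT.pos _ ((hhT p).resolve_left hp)
  have hhsum : (∑' p : ℕ × ℕ, μ (h p)) = t0 := by
    rw [ENNReal.tsum_prod']
    exact htsumA
  -- the family
  refine ⟨h '' {p | h p ≠ ∅}, ?_, ?_, ?_, ?_, ?_⟩
  · rintro J ⟨p, hp, rfl⟩
    exact (hhT p).resolve_left hp
  · rintro J ⟨p, hp, rfl⟩
    exact hhI p
  · rintro J ⟨p, hp, rfl⟩ J' ⟨q, hq, rfl⟩ hne
    exact hhpair p q (fun h' => hne (by rw [h']))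
  · have hcup : ⋃₀ (h '' {p | h p ≠ ∅}) = ⋃ p, h p := by
      apply Subset.antisymm
      · rintro x ⟨J, ⟨p, hp, rfl⟩, hx⟩
        exact mem_iUnion.mpr ⟨p, hx⟩
      · rintro x hx
        obtain ⟨p, hp⟩ := mem_iUnion.mp hx
        exact ⟨h p, ⟨p, fun h' => by rw [h'] at hp; exact hp, rfl⟩, hp⟩
    rw [hcup, measure_iUnion₀, hhsum]
    · intro p q hpq
      exact hhpair p q hpq
    · intro p
      rcases hhT p with h1 | h1
      · rw [h1]; exact MeasurableSet.empty.nullMeasurableSet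
      · exact (hT.meas _ h1).nullMeasurableSet
  · have hinj : InjOn h {p | h p ≠ ∅} := by
      intro p hp q hq hpq
      by_contra hne
      have := hhpair p q hne
      rw [hpq, inter_self] at this
      exact absurd this (hhpos q hq).ne'
    rw [tsum_image μ hinj]
    have hsupp : Function.support (fun p => μ (h p)) ⊆ {p | h p ≠ ∅} := by
      intro p hp
      simp only [Function.mem_support] at hp
      intro h1
      rw [h1] at hp
      simp at hp
    rw [tsum_subtype_eq_of_support_subset hsupp]
    exact hhsum
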